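/- arXiv:1504.01418 — 4 statements merged into one kernel-verified Lean document; each statement's English description precedes it below -/
import Mathlib

section
/- Let U, V : ℝ^D → ℝ be measurable functions such that exp(−U) and exp(−V) are integrable with positive integrals, and suppose ‖U − V‖_∞ = sup_q |U(q) − V(q)| is finite. Define the probability densities P(q) = exp(−U(q))/I_P and Q(q) = exp(−V(q))/I_Q, where I_P = ∫ exp(−U(q)) dq and I_Q = ∫ exp(−V(q)) dq. Then the Kullback–Leibler divergence satisfies D_KL(P‖Q) ≤ 2‖U − V‖_∞. -/
open MeasureTheory Real

/-- Theorem (paper, Thm 1): for Gibbs densities `P ∝ exp (-U)` and `Q ∝ exp (-V)`,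
the Kullback–Leibler divergence satisfies `D_KL(P‖Q) ≤ 2 * ‖U - V‖_∞`. -/
theorem kl_le_two_sup_norm (D : ℕ) (U V : (Fin D → ℝ) → ℝ)
    (hU : Measurable U) (hV : Measurable V)
    (hUi : Integrable (fun q => exp (-U q)))
    (hVi : Integrable (fun q => exp (-V q)))
    (hIP : 0 < ∫ q, exp (-U q))
    (hIQ : 0 < ∫ q, exp (-V q))
    (hbdd : BddAbove (Set.range fun q => |U q - V q|))
    (P Q : (Fin D → ℝ) → ℝ)
    (hP : P = fun q => exp (-U q) / ∫ q', exp (-U q'))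
    (hQ : Q = fun q => exp (-V q) / ∫ q', exp (-V q')) :
    ∫ q, P q * log (P q / Q q) ≤ 2 * ⨆ q, |U q - V q| := by
  set M := ⨆ q, |U q - V q| with hMdef
  have hMle : ∀ q, |U q - V q| ≤ M := fun q => le_ciSup hbdd q
  set IP := ∫ q, exp (-U q) with hIPdef
  set IQ := ∫ q, exp (-V q) with hIQdef
  have hIPne : IP ≠ 0 := ne_of_gt hIP
  have hIQne : IQ ≠ 0 := ne_of_gt hIQ
  have hpoint : ∀ q, P q * log (P q / Q q)
      = P q * (V q - U q) + (log IQ - log IP) * P q := by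
    intro q
    have hPq : P q = exp (-U q) / IP := by rw [hP]
    have hQq : Q q = exp (-V q) / IQ := by rw [hQ]
    rw [hPq, hQq,
        Real.log_div (div_ne_zero (exp_ne_zero _) hIPne) (div_ne_zero (exp_ne_zero _) hIQne),
        Real.log_div (exp_ne_zero _) hIPne, Real.log_div (exp_ne_zero _) hIQne,
        Real.log_exp, Real.log_exp]
    ring
  have hPint : Integrable P := by rw [hP]; exact hUi.div_const IP
  have hPnonneg : ∀ q, 0 ≤ P q := by
    intro q; rw [hP]; exact div_nonneg (exp_nonneg _) hIP.le
  have hintP : ∫ q, P q = 1 := by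
    rw [hP, integral_div, div_self hIPne]
  have hmeas1 : AEStronglyMeasurable (fun q => P q * (V q - U q)) volume := by
    rw [hP]
    exact ((hU.neg.exp.div_const IP).mul (hV.sub hU)).aestronglyMeasurable
  have hf1 : Integrable (fun q => P q * (V q - U q)) := by
    refine (hPint.const_mul M).mono hmeas1 (Filter.Eventually.of_forall fun q => ?_)
    have hM0 : 0 ≤ M := le_trans (abs_nonneg _) (hMle (fun _ => 0))
    rw [Real.norm_eq_abs, Real.norm_eq_abs, abs_mul, abs_of_nonneg (hPnonneg q),
        abs_of_nonneg (mul_nonneg hM0 (hPnonneg q))]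
    have h := hMle q
    rw [abs_sub_comm] at h
    calc P q * |V q - U q| ≤ P q * M := mul_le_mul_of_nonneg_left h (hPnonneg q)
      _ = M * P q := mul_comm _ _
  have h1 : ∫ q, P q * (V q - U q) ≤ M := by
    calc ∫ q, P q * (V q - U q) ≤ ∫ q, M * P q := by
          refine integral_mono hf1 (hPint.const_mul M) fun q => ?_
          have h := hMle q
          rw [abs_sub_comm, abs_le] at h
          calc P q * (V q - U q) ≤ P q * M :=
                mul_le_mul_of_nonneg_left h.2 (hPnonneg q)
            _ = M * P q := mul_comm _ _
      _ = M := by rw [integral_const_mul, hintP, mul_one]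
  have h2 : log IQ - log IP ≤ M := by
    have hle : IQ ≤ exp M * IP := by
      rw [hIPdef, hIQdef, ← integral_const_mul]
      refine integral_mono hVi (hUi.const_mul _) fun q => ?_
      rw [← Real.exp_add]
      apply Real.exp_le_exp.2
      have h := hMle q
      rw [abs_le] at h
      linarith [h.1, h.2]
    have hlog : log IQ ≤ log (exp M * IP) := Real.log_le_log hIQ hle
    rw [Real.log_mul (exp_ne_zero _) hIPne, Real.log_exp] at hlog
    linarith
  calc ∫ q, P q * log (P q / Q q)
      = ∫ q, (P q * (V q - U q) + (log IQ - log IP) * P q) := by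
        simp_rw [hpoint]
    _ = (∫ q, P q * (V q - U q)) + (log IQ - log IP) * ∫ q, P q := by
        rw [integral_add hf1 (hPint.const_mul _), integral_const_mul]
    _ ≤ M + M := by rw [hintP, mul_one]; exact add_le_add h1 h2
    _ = 2 * M := by ring
end

section
/- Let U : ℝ^D → ℝ be measurable with exp(−U) integrable and positive integral, and let (U_n) be a sequence of measurable functions with exp(−U_n) integrable with positive integral for each n, such that ‖U_n − U‖_∞ → 0 as n → ∞. Let P = exp(−U)/∫exp(−U) and Q_n = exp(−U_n)/∫exp(−U_n) be the associated probability densities. Then D_KL(P‖Q_n) → 0 as n → ∞. -/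
open MeasureTheory Real Filter

/-- If the potentials `U n` converge uniformly to `U` (the sup norms of the differences
tend to `0`), then the KL divergence from the target Gibbs density `P ∝ exp (-U)` to the
approximate Gibbs densities `Q n ∝ exp (-U n)` tends to `0`. -/
theorem kl_tendsto_zero_of_uniform_approx (D : ℕ)
    (U : (Fin D → ℝ) → ℝ) (Un : ℕ → (Fin D → ℝ) → ℝ)
    (hU : Measurable U) (hUn : ∀ n, Measurable (Un n))
    (hUi : Integrable (fun q => exp (-U q)))
    (hUni : ∀ n, Integrable (fun q => exp (-Un n q)))
    (hIP : 0 < ∫ q, exp (-U q))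
    (hIQ : ∀ n, 0 < ∫ q, exp (-Un n q))
    (hbdd : ∀ n, BddAbove (Set.range fun q => |Un n q - U q|))
    (hconv : Tendsto (fun n => ⨆ q, |Un n q - U q|) atTop (nhds 0))
    (P : (Fin D → ℝ) → ℝ) (Q : ℕ → (Fin D → ℝ) → ℝ)
    (hP : P = fun q => exp (-U q) / ∫ q', exp (-U q'))
    (hQ : Q = fun n q => exp (-Un n q) / ∫ q', exp (-Un n q')) :
    Tendsto (fun n => ∫ q, P q * log (P q / Q n q)) atTop (nhds 0) := by
  subst hP hQ
  set Z : ℝ := ∫ q, exp (-U q) with hZ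
  have hPint : Integrable (fun q => exp (-U q) / Z) := hUi.div_const Z
  have hPone : ∫ q, exp (-U q) / Z = 1 := by
    rw [integral_div]
    exact div_self hIP.ne'
  apply squeeze_zero_norm (a := fun n => 2 * ⨆ q, |Un n q - U q|)
  · intro n
    set ε : ℝ := ⨆ q, |Un n q - U q| with hε
    have hle : ∀ q, |Un n q - U q| ≤ ε := fun q => le_ciSup (hbdd n) q
    have hεnn : 0 ≤ ε := le_trans (abs_nonneg _) (hle (fun _ => 0))
    set Zn : ℝ := ∫ q, exp (-Un n q) with hZn
    have hZnpos : 0 < Zn := hIQ n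
    -- pointwise rewriting of the integrand
    have hpt : (fun q => (exp (-U q) / Z) * log ((exp (-U q) / Z) / (exp (-Un n q) / Zn)))
        = fun q => (exp (-U q) / Z) * (Un n q - U q) + (exp (-U q) / Z) * (log Zn - log Z) := by
      funext q
      rw [Real.log_div (by positivity) (by positivity),
          Real.log_div (exp_pos _).ne' hIP.ne',
          Real.log_div (exp_pos _).ne' hZnpos.ne',
          Real.log_exp, Real.log_exp]
      ring
    rw [hpt]
    have hint1 : Integrable (fun q => (exp (-U q) / Z) * (Un n q - U q)) := by
      have := hPint.bdd_mul (f := fun q => Un n q - U q)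
        (c := ε) (((hUn n).sub hU).aestronglyMeasurable) (Filter.Eventually.of_forall fun q => by
          simpa [Real.norm_eq_abs] using hle q)
      simpa [mul_comm] using this
    have hint2 : Integrable (fun q => (exp (-U q) / Z) * (log Zn - log Z)) :=
      hPint.mul_const _
    rw [integral_add hint1 hint2, integral_mul_const, hPone, one_mul]
    -- bound the first term
    have hb1 : |∫ q, (exp (-U q) / Z) * (Un n q - U q)| ≤ ε := by
      calc |∫ q, (exp (-U q) / Z) * (Un n q - U q)|
          ≤ ∫ q, |(exp (-U q) / Z) * (Un n q - U q)| := by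
            simp only [← Real.norm_eq_abs]
            exact norm_integral_le_integral_norm _
        _ ≤ ∫ q, (exp (-U q) / Z) * ε := by
            apply integral_mono hint1.abs (hPint.mul_const ε)
            intro q
            simp only []
            rw [abs_mul, abs_of_pos (by positivity)]
            exact mul_le_mul_of_nonneg_left (hle q) (by positivity)
        _ = ε := by rw [integral_mul_const, hPone, one_mul]
    -- bound log Zn - log Z
    have hZnle : Zn ≤ exp ε * Z := by
      rw [hZn, hZ, ← integral_const_mul]
      apply integral_mono (hUni n) (hUi.const_mul _)
      intro q
      simp only []
      rw [← Real.exp_add, Real.exp_le_exp]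
      have := (abs_le.mp (hle q)).1
      linarith
    have hZnge : exp (-ε) * Z ≤ Zn := by
      rw [hZn, hZ, ← integral_const_mul]
      apply integral_mono (hUi.const_mul _) (hUni n)
      intro q
      simp only []
      rw [← Real.exp_add, Real.exp_le_exp]
      have := (abs_le.mp (hle q)).2
      linarith
    have hb2 : |log Zn - log Z| ≤ ε := by
      rw [abs_le]
      constructor
      · have := Real.log_le_log (by positivity) hZnge
        rw [Real.log_mul (exp_pos _).ne' hIP.ne', Real.log_exp] at this
        linarith
      · have := Real.log_le_log hZnpos hZnle
        rw [Real.log_mul (exp_pos _).ne' hIP.ne', Real.log_exp] at this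
        linarith
    calc ‖(∫ q, (exp (-U q) / Z) * (Un n q - U q)) + (log Zn - log Z)‖
        ≤ |∫ q, (exp (-U q) / Z) * (Un n q - U q)| + |log Zn - log Z| := by
          simpa [Real.norm_eq_abs] using abs_add_le _ _
      _ ≤ ε + ε := add_le_add hb1 hb2
      _ = 2 * ε := by ring
  · simpa using hconv.const_mul 2
end

section
/- Let U, V : ℝ^D → ℝ be measurable functions such that exp(−U) and exp(−V) are integrable with positive integrals, suppose ‖U − V‖_∞ is finite, and let P = exp(−U)/∫exp(−U) and Q = exp(−V)/∫exp(−V). Then the reverse Kullback–Leibler divergence also satisfies D_KL(Q‖P) ≤ 2‖U − V‖_∞. -/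
open MeasureTheory Real

/-- The reverse Kullback–Leibler divergence between the Gibbs densities `P ∝ exp (-U)`
and `Q ∝ exp (-V)` also satisfies `D_KL(Q‖P) ≤ 2 * ‖U - V‖_∞`. -/
theorem reverse_kl_le_two_sup_norm (D : ℕ) (U V : (Fin D → ℝ) → ℝ)
    (hU : Measurable U) (hV : Measurable V)
    (hUi : Integrable (fun q => exp (-U q)))
    (hVi : Integrable (fun q => exp (-V q)))
    (hIP : 0 < ∫ q, exp (-U q))
    (hIQ : 0 < ∫ q, exp (-V q))
    (hbdd : BddAbove (Set.range fun q => |U q - V q|))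
    (P Q : (Fin D → ℝ) → ℝ)
    (hP : P = fun q => exp (-U q) / ∫ q', exp (-U q'))
    (hQ : Q = fun q => exp (-V q) / ∫ q', exp (-V q')) :
    ∫ q, Q q * log (Q q / P q) ≤ 2 * ⨆ q, |U q - V q| := by
  set M := ⨆ q, |U q - V q| with hM
  have hle : ∀ q, |U q - V q| ≤ M := fun q => le_ciSup hbdd q
  set IP := ∫ q, exp (-U q) with hIPdef
  set IQ := ∫ q, exp (-V q) with hIQdef
  have hQpos : ∀ q, 0 < Q q := by
    intro q; rw [hQ]; exact div_pos (exp_pos _) hIQ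
  have hQint : Integrable Q := by rw [hQ]; exact hVi.div_const _
  have hQint1 : ∫ q, Q q = 1 := by
    rw [hQ, integral_div]
    field_simp
    exact hIQdef.symm
  have hlog : ∀ q, log (Q q / P q) = (U q - V q) + (log IP - log IQ) := by
    intro q
    rw [hQ, hP]
    simp only
    rw [log_div (div_ne_zero (exp_ne_zero _) hIQ.ne') (div_ne_zero (exp_ne_zero _) hIP.ne'),
      log_div (exp_ne_zero _) hIQ.ne', log_div (exp_ne_zero _) hIP.ne', log_exp, log_exp]
    ring
  have hmeas : AEStronglyMeasurable (fun q => Q q * (U q - V q)) volume := by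
    rw [hQ]
    exact ((hV.neg.exp.div_const _).mul (hU.sub hV)).aestronglyMeasurable
  have hint1 : Integrable (fun q => Q q * (U q - V q)) := by
    apply Integrable.mono' (hQint.const_mul M) hmeas
    filter_upwards with q
    rw [norm_mul, Real.norm_eq_abs, Real.norm_eq_abs, abs_of_pos (hQpos q)]
    calc Q q * |U q - V q| ≤ Q q * M := mul_le_mul_of_nonneg_left (hle q) (hQpos q).le
      _ = M * Q q := mul_comm _ _
  have hsplit : ∫ q, Q q * ((U q - V q) + (log IP - log IQ))
      = (∫ q, Q q * (U q - V q)) + (log IP - log IQ) := by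
    have he : (fun q => Q q * ((U q - V q) + (log IP - log IQ)))
        = fun q => Q q * (U q - V q) + (log IP - log IQ) * Q q := by
      funext q; ring
    rw [he, integral_add hint1 (hQint.const_mul _), integral_const_mul, hQint1, mul_one]
  have hb1 : ∫ q, Q q * (U q - V q) ≤ M := by
    calc ∫ q, Q q * (U q - V q) ≤ ∫ q, M * Q q := by
          apply integral_mono hint1 (hQint.const_mul M)
          intro q
          calc Q q * (U q - V q) ≤ Q q * |U q - V q| :=
                mul_le_mul_of_nonneg_left (le_abs_self _) (hQpos q).le
            _ ≤ Q q * M := mul_le_mul_of_nonneg_left (hle q) (hQpos q).le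
            _ = M * Q q := mul_comm _ _
      _ = M := by rw [integral_const_mul, hQint1, mul_one]
  have hb2 : log IP - log IQ ≤ M := by
    have hIPle : IP ≤ exp M * IQ := by
      rw [hIPdef, hIQdef, ← integral_const_mul]
      apply integral_mono hUi (hVi.const_mul _)
      intro q
      simp only
      rw [← Real.exp_add]
      apply exp_le_exp.mpr
      have h := (abs_le.mp (hle q)).1
      linarith
    have : log IP ≤ log (exp M * IQ) := Real.log_le_log hIP hIPle
    rw [log_mul (exp_ne_zero _) hIQ.ne', log_exp] at this
    linarith
  simp_rw [hlog]
  rw [hsplit]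
  linarith
end

section
/- Fix d ≥ 1 and for each coordinate k ∈ {1, …, d} let (u_k(i))_{i ≥ 0} be a sequence of real numbers with u_k(0) = 0, and define the differences δ_k(i) = u_k(i) − u_k(i − 1) for i ≥ 1. Then for every integer q ≥ d, ∑_{i ∈ ℕ_{≥1}^d, i₁ + ⋯ + i_d ≤ q} ∏_{k=1}^d δ_k(i_k) = ∑_{i ∈ ℕ_{≥1}^d, q − d + 1 ≤ i₁ + ⋯ + i_d ≤ q} (−1)^{q − (i₁ + ⋯ + i_d)} · C(d − 1, q − (i₁ + ⋯ + i_d)) · ∏_{k=1}^d u_k(i_k), where C(·,·) is the binomial coefficient. -/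
open Finset


private lemma alt_sum_choose (d : ℕ) (hd : 1 ≤ d) (N : ℕ) :
    ∑ m ∈ Finset.range (N + 1), (-1 : ℝ) ^ m * (d.choose m : ℝ)
      = (-1 : ℝ) ^ N * ((d - 1).choose N : ℝ) := by
  obtain ⟨e, rfl⟩ : ∃ e, d = e + 1 := ⟨d - 1, by omega⟩
  induction N with
  | zero => simp
  | succ N ih =>
      simp only [Nat.add_sub_cancel] at ih ⊢
      rw [Finset.sum_range_succ, ih, Nat.choose_succ_succ]
      push_cast
      ring

private lemma powerset_alt_sum (d : ℕ) (hd : 1 ≤ d) (N : ℕ) :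
    ∑ S ∈ (Finset.univ : Finset (Fin d)).powerset,
        (if d - S.card ≤ N then (-1 : ℝ) ^ (d - S.card) else 0)
      = (-1 : ℝ) ^ N * ((d - 1).choose N : ℝ) := by
  rw [← alt_sum_choose d hd N]
  have h1 : ∑ S ∈ (Finset.univ : Finset (Fin d)).powerset,
        (if d - S.card ≤ N then (-1 : ℝ) ^ (d - S.card) else 0)
      = ∑ c ∈ Finset.range (d + 1),
          (d.choose c) • (if d - c ≤ N then (-1 : ℝ) ^ (d - c) else 0) := by
    have := Finset.sum_powerset_apply_card
      (f := fun c => if d - c ≤ N then (-1 : ℝ) ^ (d - c) else 0)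
      (x := (Finset.univ : Finset (Fin d)))
    simpa using this
  rw [h1, ← Finset.sum_range_reflect]
  have h2 : ∀ c ∈ Finset.range (d + 1),
      (d.choose (d + 1 - 1 - c)) • (if d - (d + 1 - 1 - c) ≤ N then (-1 : ℝ) ^ (d - (d + 1 - 1 - c)) else 0)
      = if c ≤ N then (-1 : ℝ) ^ c * (d.choose c : ℝ) else 0 := by
    intro c hc
    rw [Finset.mem_range] at hc
    have e1 : d + 1 - 1 - c = d - c := by omega
    have e2 : d - (d - c) = c := by omega
    have e3 : d.choose (d - c) = d.choose c := Nat.choose_symm (by omega)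
    rw [e1, e2, e3]
    split
    · simp [nsmul_eq_mul]; ring
    · simp
  rw [Finset.sum_congr rfl h2]
  rw [← Finset.sum_filter]
  have h3 : (Finset.range (d+1)).filter (· ≤ N) = Finset.range (min d N + 1) := by
    ext m; simp only [Finset.mem_filter, Finset.mem_range]; omega
  rw [h3]
  apply Finset.sum_subset
  · intro m hm; rw [Finset.mem_range] at *; omega
  · intro m hm hm'
    rw [Finset.mem_range] at *
    have : d < m := by omega
    simp [Nat.choose_eq_zero_of_lt this]

private lemma fin_to_nat_sum (d q : ℕ) (p : (Fin d → ℕ) → Prop) [DecidablePred p]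
    (φ : (Fin d → ℕ) → ℝ) :
    ∑ i ∈ Finset.univ.filter (fun i : Fin d → Fin (q + 1) => p (fun k => (i k : ℕ))),
        φ (fun k => (i k : ℕ))
      = ∑ j ∈ (Fintype.piFinset fun _ : Fin d => Finset.range (q + 1)).filter p, φ j := by
  refine Finset.sum_bij' (fun i _ => fun k => ((i k : ℕ)))
    (fun j hj => fun k => ⟨j k, ?_⟩) ?_ ?_ ?_ ?_ ?_
  · rw [Finset.mem_filter, Fintype.mem_piFinset] at hj
    simpa using hj.1 k
  · intro a ha
    rw [Finset.mem_filter] at ha ⊢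
    refine ⟨?_, ha.2⟩
    rw [Fintype.mem_piFinset]
    intro k
    simpa using (a k).isLt
  · intro a ha
    rw [Finset.mem_filter] at ha ⊢
    exact ⟨Finset.mem_univ _, ha.2⟩
  · intro a ha; rfl
  · intro a ha; rfl
  · intro a ha; rfl

private lemma smolyak_nat (d q : ℕ) (hd : 1 ≤ d) (hdq : d ≤ q)
    (u : Fin d → ℕ → ℝ) (hu : ∀ k, u k 0 = 0) :
    ∑ j ∈ (Fintype.piFinset fun _ : Fin d => Finset.range (q + 1)).filter
        (fun j => (∀ k, 1 ≤ j k) ∧ ∑ k, j k ≤ q),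
      ∏ k, (u k (j k) - u k (j k - 1))
    = ∑ j ∈ (Fintype.piFinset fun _ : Fin d => Finset.range (q + 1)).filter
        (fun j => (∀ k, 1 ≤ j k) ∧ q - d + 1 ≤ ∑ k, j k ∧ ∑ k, j k ≤ q),
      (-1 : ℝ) ^ (q - ∑ k, j k) * ((d - 1).choose (q - ∑ k, j k) : ℝ) *
        ∏ k, u k (j k) := by
  classical
  set P : Finset (Fin d → ℕ) := Fintype.piFinset fun _ : Fin d => Finset.range (q + 1) with hP
  set A : Finset (Fin d → ℕ) := P.filter (fun j => (∀ k, 1 ≤ j k) ∧ ∑ k, j k ≤ q) with hA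
  -- Step R : extend the RHS to A
  have hR : ∑ j ∈ P.filter (fun j => (∀ k, 1 ≤ j k) ∧ q - d + 1 ≤ ∑ k, j k ∧ ∑ k, j k ≤ q),
        (-1 : ℝ) ^ (q - ∑ k, j k) * ((d - 1).choose (q - ∑ k, j k) : ℝ) * ∏ k, u k (j k)
      = ∑ j ∈ A,
        (-1 : ℝ) ^ (q - ∑ k, j k) * ((d - 1).choose (q - ∑ k, j k) : ℝ) * ∏ k, u k (j k) := by
    apply Finset.sum_subset
    · intro j hj
      rw [Finset.mem_filter] at hj ⊢
      exact ⟨hj.1, hj.2.1, hj.2.2.2⟩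
    · intro j hjA hj'
      rw [hA, Finset.mem_filter] at hjA
      rw [Finset.mem_filter] at hj'
      have hs : ¬ (q - d + 1 ≤ ∑ k, j k) := by
        intro h; exact hj' ⟨hjA.1, hjA.2.1, h, hjA.2.2⟩
      have : d - 1 < q - ∑ k, j k := by omega
      rw [Nat.choose_eq_zero_of_lt this]
      simp
  rw [hR]
  -- expansion of the product of differences
  have expand : ∀ j : Fin d → ℕ, ∏ k, (u k (j k) - u k (j k - 1))
      = ∑ t ∈ (Finset.univ : Finset (Fin d)).powerset,
          (-1 : ℝ) ^ (d - t.card) * ∏ k, u k (j k - if k ∈ t then 0 else 1) := by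
    intro j
    simp only [sub_eq_add_neg]
    rw [Finset.prod_add]
    apply Finset.sum_congr rfl
    intro t ht
    have hcard : (Finset.univ \ t).card = d - t.card := by
      rw [Finset.card_sdiff_of_subset (Finset.subset_univ t), Finset.card_univ, Fintype.card_fin]
    have hneg : ∏ k ∈ Finset.univ \ t, (-u k (j k - 1))
        = (-1 : ℝ) ^ (d - t.card) * ∏ k ∈ Finset.univ \ t, u k (j k - 1) := by
      rw [← hcard]
      have hneg1 : ∀ k ∈ Finset.univ \ t, -u k (j k - 1) = (-1 : ℝ) * u k (j k - 1) := by
        intros; ring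
      rw [Finset.prod_congr rfl hneg1, Finset.prod_mul_distrib, Finset.prod_const]
    rw [hneg]
    have hsplit : ∏ k, u k (j k - if k ∈ t then 0 else 1)
        = (∏ k ∈ t, u k (j k)) * ∏ k ∈ Finset.univ \ t, u k (j k - 1) := by
      rw [mul_comm, ← Finset.prod_sdiff (Finset.subset_univ t)]
      congr 1
      · exact Finset.prod_congr rfl fun k hk => by
          rw [if_neg (Finset.mem_sdiff.mp hk).2]
      · exact Finset.prod_congr rfl fun k hk => by rw [if_pos hk, Nat.sub_zero]
    rw [hsplit]
    ring
  -- the shift bijection for a fixed t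
  have shift : ∀ t : Finset (Fin d),
      (∑ j ∈ A, ∏ k, u k (j k - if k ∈ t then 0 else 1))
        = ∑ j ∈ A.filter (fun j => (∑ k, j k) + (d - t.card) ≤ q), ∏ k, u k (j k) := by
    intro t
    have hchi : (∑ k : Fin d, if k ∈ t then 0 else 1) = d - t.card := by
      rw [Finset.sum_ite, Finset.sum_const, Finset.sum_const]
      have : Finset.univ.filter (fun k => ¬ k ∈ t) = Finset.univ \ t := by
        ext k; simp
      rw [this, Finset.card_sdiff_of_subset (Finset.subset_univ t), Finset.card_univ, Fintype.card_fin]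
      simp
    have step1 : (∑ j ∈ A, ∏ k, u k (j k - if k ∈ t then 0 else 1))
        = ∑ j ∈ A.filter (fun j => ∀ k, k ∉ t → 2 ≤ j k),
            ∏ k, u k (j k - if k ∈ t then 0 else 1) := by
      symm
      apply Finset.sum_subset (Finset.filter_subset _ _)
      intro j hjA hj'
      rw [Finset.mem_filter, not_and] at hj'
      obtain ⟨k, hkt, hk2⟩ : ∃ k, k ∉ t ∧ j k < 2 := by
        have := hj' hjA
        push_neg at this
        obtain ⟨k, h1, h2⟩ := this
        exact ⟨k, h1, by omega⟩
      have h1 : 1 ≤ j k := by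
        rw [hA, Finset.mem_filter] at hjA
        exact hjA.2.1 k
      have hjk : j k = 1 := by omega
      apply Finset.prod_eq_zero (Finset.mem_univ k)
      rw [if_neg hkt, hjk]
      simpa using hu k
    rw [step1]
    refine Finset.sum_bij' (i := fun j _ => fun k => j k - if k ∈ t then 0 else 1)
      (j := fun j _ => fun k => j k + if k ∈ t then 0 else 1) ?_ ?_ ?_ ?_ ?_
    · -- forward membership
      intro a ha
      simp only [hA, hP, Finset.mem_filter, Fintype.mem_piFinset, Finset.mem_range] at ha ⊢
      obtain ⟨⟨hrange, hone, hsum⟩, h2⟩ := ha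
      have hsumeq : (∑ k, (a k - if k ∈ t then 0 else 1)) + (d - t.card) = ∑ k, a k := by
        rw [← hchi, ← Finset.sum_add_distrib]
        apply Finset.sum_congr rfl
        intro k _
        by_cases hk : k ∈ t
        · simp [hk]
        · have := h2 k hk
          simp only [if_neg hk]
          omega
      refine ⟨⟨fun k => ?_, fun k => ?_, by omega⟩, by omega⟩
      · have := hrange k; omega
      · by_cases hk : k ∈ t
        · simp only [if_pos hk]; have := hone k; omega
        · have := h2 k hk; simp only [if_neg hk]; omega
    · -- backward membership
      intro a ha
      simp only [hA, hP, Finset.mem_filter, Fintype.mem_piFinset, Finset.mem_range] at ha ⊢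
      obtain ⟨⟨hrange, hone, hsum⟩, hcond⟩ := ha
      have hsumeq : (∑ k, (a k + if k ∈ t then 0 else 1)) = (∑ k, a k) + (d - t.card) := by
        rw [← hchi, Finset.sum_add_distrib]
      refine ⟨⟨fun k => ?_, fun k => ?_, by omega⟩, fun k hk => ?_⟩
      · -- range
        have h1 : a k ≤ ∑ k, a k :=
          Finset.single_le_sum (fun k _ => Nat.zero_le (a k)) (Finset.mem_univ k)
        by_cases hk : k ∈ t
        · simp only [if_pos hk]; omega
        · have htcard : t.card < d := by
            have : t ⊂ Finset.univ := Finset.ssubset_univ_iff.mpr (fun h => hk (h ▸ Finset.mem_univ k))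
            simpa [Finset.card_univ] using Finset.card_lt_card this
          simp only [if_neg hk]; omega
      · by_cases hk : k ∈ t <;> simp only [if_pos, if_neg, hk] <;> have := hone k <;> omega
      · have := hone k; simp only [if_neg hk]; omega
    · -- left inverse
      intro a ha
      simp only [hA, Finset.mem_filter] at ha
      funext k
      by_cases hk : k ∈ t
      · simp [hk]
      · have := ha.2 k hk; simp only [if_neg hk]; omega
    · -- right inverse
      intro a ha
      funext k
      by_cases hk : k ∈ t <;> simp [hk]
    · intro a ha; rfl
  -- assemble
  calc ∑ j ∈ A, ∏ k, (u k (j k) - u k (j k - 1))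
      = ∑ j ∈ A, ∑ t ∈ (Finset.univ : Finset (Fin d)).powerset,
          (-1 : ℝ) ^ (d - t.card) * ∏ k, u k (j k - if k ∈ t then 0 else 1) :=
        Finset.sum_congr rfl fun j _ => expand j
    _ = ∑ t ∈ (Finset.univ : Finset (Fin d)).powerset, ∑ j ∈ A,
          (-1 : ℝ) ^ (d - t.card) * ∏ k, u k (j k - if k ∈ t then 0 else 1) :=
        Finset.sum_comm
    _ = ∑ t ∈ (Finset.univ : Finset (Fin d)).powerset,
          (-1 : ℝ) ^ (d - t.card) *
            ∑ j ∈ A.filter (fun j => (∑ k, j k) + (d - t.card) ≤ q), ∏ k, u k (j k) := by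
        apply Finset.sum_congr rfl
        intro t _
        rw [← Finset.mul_sum, shift t]
    _ = ∑ t ∈ (Finset.univ : Finset (Fin d)).powerset, ∑ j ∈ A,
          (if (∑ k, j k) + (d - t.card) ≤ q then
              (-1 : ℝ) ^ (d - t.card) * ∏ k, u k (j k) else 0) := by
        apply Finset.sum_congr rfl
        intro t _
        rw [Finset.sum_filter, Finset.mul_sum]
        apply Finset.sum_congr rfl
        intro j _
        rw [mul_ite, mul_zero]
    _ = ∑ j ∈ A, ∑ t ∈ (Finset.univ : Finset (Fin d)).powerset,
          (if (∑ k, j k) + (d - t.card) ≤ q then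
              (-1 : ℝ) ^ (d - t.card) * ∏ k, u k (j k) else 0) :=
        Finset.sum_comm
    _ = ∑ j ∈ A,
          (-1 : ℝ) ^ (q - ∑ k, j k) * ((d - 1).choose (q - ∑ k, j k) : ℝ) * ∏ k, u k (j k) := by
        apply Finset.sum_congr rfl
        intro j hj
        have hsq : ∑ k, j k ≤ q := by
          rw [hA, Finset.mem_filter] at hj
          exact hj.2.2
        calc ∑ t ∈ (Finset.univ : Finset (Fin d)).powerset,
              (if (∑ k, j k) + (d - t.card) ≤ q then
                  (-1 : ℝ) ^ (d - t.card) * ∏ k, u k (j k) else 0)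
            = (∑ t ∈ (Finset.univ : Finset (Fin d)).powerset,
                (if d - t.card ≤ q - ∑ k, j k then (-1 : ℝ) ^ (d - t.card) else 0)) *
                  ∏ k, u k (j k) := by
              rw [Finset.sum_mul]
              apply Finset.sum_congr rfl
              intro t _
              by_cases h : (∑ k, j k) + (d - t.card) ≤ q
              · rw [if_pos h, if_pos (by omega : d - t.card ≤ q - ∑ k, j k)]
              · rw [if_neg h, if_neg (by omega : ¬ d - t.card ≤ q - ∑ k, j k), zero_mul]
          _ = (-1 : ℝ) ^ (q - ∑ k, j k) * ((d - 1).choose (q - ∑ k, j k) : ℝ) *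
                ∏ k, u k (j k) := by
              rw [powerset_alt_sum d hd (q - ∑ k, j k)]

/-- The combinatorial identity underlying Smolyak's sparse grid formula: with
`u k 0 = 0` and differences `δ k i = u k i - u k (i-1)`,
`∑_{|i| ≤ q, i ≥ 1} ∏ₖ δ k (iₖ)
  = ∑_{q-d+1 ≤ |i| ≤ q, i ≥ 1} (-1)^(q-|i|) C(d-1, q-|i|) ∏ₖ u k (iₖ)`. -/
theorem smolyak_formula (d q : ℕ) (hd : 1 ≤ d) (hdq : d ≤ q)
    (u : Fin d → ℕ → ℝ) (hu : ∀ k, u k 0 = 0) :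
    ∑ i ∈ Finset.univ.filter (fun i : Fin d → Fin (q + 1) =>
          (∀ k, 1 ≤ (i k : ℕ)) ∧ ∑ k, (i k : ℕ) ≤ q),
        ∏ k, (u k (i k) - u k ((i k : ℕ) - 1))
      =
      ∑ i ∈ Finset.univ.filter (fun i : Fin d → Fin (q + 1) =>
          (∀ k, 1 ≤ (i k : ℕ)) ∧ q - d + 1 ≤ ∑ k, (i k : ℕ) ∧ ∑ k, (i k : ℕ) ≤ q),
        (-1 : ℝ) ^ (q - ∑ k, (i k : ℕ)) * ((d - 1).choose (q - ∑ k, (i k : ℕ)) : ℝ) *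
          ∏ k, u k (i k) := by
  classical
  have h1 := fin_to_nat_sum d q (fun v => (∀ k, 1 ≤ v k) ∧ ∑ k, v k ≤ q)
    (fun v => ∏ k, (u k (v k) - u k (v k - 1)))
  have h2 := fin_to_nat_sum d q
    (fun v => (∀ k, 1 ≤ v k) ∧ q - d + 1 ≤ ∑ k, v k ∧ ∑ k, v k ≤ q)
    (fun v => (-1 : ℝ) ^ (q - ∑ k, v k) * ((d - 1).choose (q - ∑ k, v k) : ℝ) *
      ∏ k, u k (v k))
  exact h1.trans ((smolyak_nat d q hd hdq u hu).trans h2.symm)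
end
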